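/- For every real n > 0, the function φ̃_n is nondecreasing on [0,∞): if 0 ≤ y₁ ≤ y₂ then φ̃_n(y₁) ≤ φ̃_n(y₂). -/

import Mathlib

/-- `C_n = e(1+n)² − 1`. -/
noncomputable def Cn (n : ℝ) : ℝ := Real.exp 1 * (1 + n) ^ 2 - 1

/-- The cut-off function `φ̃_n` of the Mellet–Vasseur argument (Lemma 4.2 of the paper). -/
noncomputable def phiTilde (n y : ℝ) : ℝ :=
  if y ≤ n then (1 + y) * Real.log (1 + y)
  else if y ≤ Cn n then
    2 * (1 + Real.log (1 + n)) * y - (1 + y) * Real.log (1 + y)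
      + 2 * (Real.log (1 + n) - n)
  else Real.exp 1 * (1 + n) ^ 2 - 2 * n - 2

/-- The derivative `φ̃_n'` of the cut-off function `φ̃_n`. -/
noncomputable def Dn (n y : ℝ) : ℝ :=
  if y ≤ n then 1 + Real.log (1 + y)
  else if y ≤ Cn n then 2 * (1 + Real.log (1 + n)) - 1 - Real.log (1 + y)
  else 0

/-- The second derivative `φ̃_n''` of the cut-off function `φ̃_n`
(away from the junction points `y = n`, `y = C_n`). -/
noncomputable def phi2 (n y : ℝ) : ℝ :=
  if y < n then 1 / (1 + y)
  else if y < Cn n then -(1 / (1 + y))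
  else 0

lemma hderivf (y : ℝ) (hy : (0:ℝ) < 1 + y) :
    HasDerivAt (fun y : ℝ => (1 + y) * Real.log (1 + y)) (Real.log (1 + y) + 1) y := by
  have h1 : HasDerivAt (fun y : ℝ => 1 + y) 1 y := by
    simpa using (hasDerivAt_id y).const_add (1:ℝ)
  have h2 : HasDerivAt (fun y : ℝ => Real.log (1 + y)) (1 / (1 + y)) y := by
    simpa [Function.comp_def] using (Real.hasDerivAt_log hy.ne').comp y h1
  have h := h1.mul h2
  refine h.congr_deriv ?_
  field_simp

lemma hderivg (n y : ℝ) (hy : (0:ℝ) < 1 + y) :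
    HasDerivAt (fun y : ℝ => 2 * (1 + Real.log (1 + n)) * y - (1 + y) * Real.log (1 + y)
      + 2 * (Real.log (1 + n) - n))
      (2 * (1 + Real.log (1 + n)) - (Real.log (1 + y) + 1)) y := by
  have h := (((hasDerivAt_id y).const_mul (2 * (1 + Real.log (1 + n)))).sub
      (hderivf y hy)).add_const (2 * (Real.log (1 + n) - n))
  refine h.congr_deriv ?_
  ring

lemma monoA : MonotoneOn (fun y : ℝ => (1 + y) * Real.log (1 + y)) (Set.Ici 0) := by
  apply monotoneOn_of_hasDerivWithinAt_nonneg (convex_Ici 0)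
    (f' := fun y => Real.log (1 + y) + 1)
  · intro x hx
    have hx0 : (0:ℝ) ≤ x := hx
    exact (hderivf x (by linarith)).continuousAt.continuousWithinAt
  · intro x hx
    rw [interior_Ici] at hx
    exact (hderivf x (by have : (0:ℝ) < x := hx; linarith)).hasDerivWithinAt
  · intro x hx
    rw [interior_Ici] at hx
    have hx0 : (0:ℝ) < x := hx
    have : 0 ≤ Real.log (1 + x) := Real.log_nonneg (by linarith)
    linarith

lemma log_le_of_le_Cn (n x : ℝ) (hx0 : (0:ℝ) < 1 + x) (hxn : 0 < 1 + n)
    (hx : x ≤ Cn n) : Real.log (1 + x) ≤ 1 + 2 * Real.log (1 + n) := by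
  have h1 : (1:ℝ) + x ≤ Real.exp 1 * (1 + n) ^ 2 := by
    simp only [Cn] at hx; linarith
  calc Real.log (1 + x) ≤ Real.log (Real.exp 1 * (1 + n) ^ 2) :=
        Real.log_le_log hx0 h1
    _ = 1 + 2 * Real.log (1 + n) := by
        rw [Real.log_mul (Real.exp_pos 1).ne' (by positivity), Real.log_exp,
          Real.log_pow]
        push_cast; ring

lemma monoB (n : ℝ) (hn : 0 < n) :
    MonotoneOn (fun y : ℝ => 2 * (1 + Real.log (1 + n)) * y - (1 + y) * Real.log (1 + y)
      + 2 * (Real.log (1 + n) - n)) (Set.Icc n (Cn n)) := by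
  apply monotoneOn_of_hasDerivWithinAt_nonneg (convex_Icc _ _)
    (f' := fun y => 2 * (1 + Real.log (1 + n)) - (Real.log (1 + y) + 1))
  · intro x hx
    have : n ≤ x := hx.1
    exact (hderivg n x (by linarith)).continuousAt.continuousWithinAt
  · intro x hx
    rw [interior_Icc] at hx
    exact (hderivg n x (by have := hx.1; linarith)).hasDerivWithinAt
  · intro x hx
    rw [interior_Icc] at hx
    have hx0 : (0:ℝ) < 1 + x := by have := hx.1; linarith
    have := log_le_of_le_Cn n x hx0 (by linarith) hx.2.le
    linarith

lemma n_lt_Cn (n : ℝ) (hn : 0 < n) : n < Cn n := by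
  have he : (2.7182818283 : ℝ) < Real.exp 1 := Real.exp_one_gt_d9
  simp only [Cn]
  nlinarith

lemma g_at_Cn (n : ℝ) (hn : 0 < n) :
    2 * (1 + Real.log (1 + n)) * Cn n - (1 + Cn n) * Real.log (1 + Cn n)
      + 2 * (Real.log (1 + n) - n) = Real.exp 1 * (1 + n) ^ 2 - 2 * n - 2 := by
  have hCn : n < Cn n := n_lt_Cn n hn
  have h1 : (1:ℝ) + Cn n = Real.exp 1 * (1 + n) ^ 2 := by simp [Cn]
  have hlog : Real.log (1 + Cn n) = 1 + 2 * Real.log (1 + n) := by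
    rw [h1, Real.log_mul (Real.exp_pos 1).ne' (by positivity), Real.log_exp,
      Real.log_pow]
    push_cast; ring
  rw [hlog, h1]
  simp only [Cn]
  ring

/-- `φ̃_n` is nondecreasing on `[0,∞)`. -/
theorem phiTilde_monotone_in_y
    (n : ℝ) (hn : 0 < n) (y₁ y₂ : ℝ) (h0 : 0 ≤ y₁) (h12 : y₁ ≤ y₂) :
    phiTilde n y₁ ≤ phiTilde n y₂ := by
  have hCn : n < Cn n := n_lt_Cn n hn
  have hgn : (1 + n) * Real.log (1 + n) =
      2 * (1 + Real.log (1 + n)) * n - (1 + n) * Real.log (1 + n)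
        + 2 * (Real.log (1 + n) - n) := by ring
  by_cases h1 : y₁ ≤ n
  · by_cases h2 : y₂ ≤ n
    · simp only [phiTilde, if_pos h1, if_pos h2]
      exact monoA h0 (le_trans h0 h12) h12
    · push_neg at h2
      have step1 : (1 + y₁) * Real.log (1 + y₁) ≤ (1 + n) * Real.log (1 + n) :=
        monoA h0 (le_trans h0 h1) h1
      by_cases h3 : y₂ ≤ Cn n
      · simp only [phiTilde, if_pos h1, if_neg (not_le.mpr h2), if_pos h3]
        have step2 := monoB n hn (Set.mem_Icc.mpr ⟨le_refl n, hCn.le⟩)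
          (Set.mem_Icc.mpr ⟨h2.le, h3⟩) h2.le
        simp only [] at step2
        linarith [hgn ▸ step1]
      · simp only [phiTilde, if_pos h1, if_neg (not_le.mpr h2), if_neg h3]
        have step2 := monoB n hn (Set.mem_Icc.mpr ⟨le_refl n, hCn.le⟩)
          (Set.mem_Icc.mpr ⟨hCn.le, le_refl _⟩) hCn.le
        simp only [] at step2
        have := g_at_Cn n hn
        linarith [hgn ▸ step1]
  · push_neg at h1
    have h2 : ¬ y₂ ≤ n := not_le.mpr (lt_of_lt_of_le h1 h12)
    by_cases h3 : y₁ ≤ Cn n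
    · by_cases h4 : y₂ ≤ Cn n
      · simp only [phiTilde, if_neg (not_le.mpr h1), h2, if_neg h2, if_pos h3, if_pos h4]
        exact monoB n hn (Set.mem_Icc.mpr ⟨h1.le, h3⟩)
          (Set.mem_Icc.mpr ⟨lt_of_lt_of_le h1 h12 |>.le, h4⟩) h12
      · simp only [phiTilde, if_neg (not_le.mpr h1), if_neg h2, if_pos h3, if_neg h4]
        have step := monoB n hn (Set.mem_Icc.mpr ⟨h1.le, h3⟩)
          (Set.mem_Icc.mpr ⟨hCn.le, le_refl _⟩) h3
        simp only [] at step
        have := g_at_Cn n hn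
        linarith
    · push_neg at h3
      have h4 : ¬ y₂ ≤ Cn n := not_le.mpr (lt_of_lt_of_le h3 h12)
      simp only [phiTilde, if_neg (not_le.mpr h1), if_neg h2, if_neg (not_le.mpr h3), if_neg h4]
      exact le_refl _
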